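/- Let Rad be a root system in a finite-dimensional real inner product space V and let t be an involution of Rad. Then there exist a special involution ε of Rad and pairwise strongly orthogonal roots β₁, …, β_r ∈ Rad (possibly r = 0) with ε(β_i) = β_i and t(β_i) = −β_i for all i, such that t = ε ∘ s_{β₁} ∘ ⋯ ∘ s_{β_r}. -/

import Mathlib

open scoped RealInnerProductSpace

namespace PaperRS

variable {V : Type*} [NormedAddCommGroup V] [InnerProductSpace ℝ V]

/-- The reflection in a root `α`. -/
noncomputable def reflRoot (α x : V) : V := x - (2 * ⟪x, α⟫ / ⟪α, α⟫) • α

/-- `Rad` is a (reduced, crystallographic) root system in `V`. -/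
structure IsRootSystem (Rad : Set V) : Prop where
  finite : Rad.Finite
  nonzero : ∀ α ∈ Rad, α ≠ 0
  spanning : Submodule.span ℝ Rad = ⊤
  integral : ∀ α ∈ Rad, ∀ β ∈ Rad, ∃ n : ℤ, 2 * ⟪β, α⟫ / ⟪α, α⟫ = (n : ℝ)
  reflMem : ∀ α ∈ Rad, ∀ β ∈ Rad, reflRoot α β ∈ Rad
  reduced : ∀ α ∈ Rad, ∀ c : ℝ, c • α ∈ Rad → c = 1 ∨ c = -1

/-- Irreducibility: `Rad` is not the union of two nonempty mutually orthogonal subsets. -/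
def IsIrreducible (Rad : Set V) : Prop :=
  ¬ ∃ R₁ R₂ : Set V, R₁.Nonempty ∧ R₂.Nonempty ∧ Rad = R₁ ∪ R₂ ∧
      ∀ α ∈ R₁, ∀ β ∈ R₂, ⟪α, β⟫ = 0

/-- An involution of the root system `Rad`: an orthogonal linear automorphism `t` of `V`
with `t(Rad) = Rad` and `t ∘ t = id`. -/
structure IsInvolution (Rad : Set V) (t : V ≃ₗᵢ[ℝ] V) : Prop where
  maps : (⇑t) '' Rad = Rad
  invol : ∀ x : V, t (t x) = x

/-- Two roots are strongly orthogonal if neither their sum nor their difference is a root. -/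
def StronglyOrthogonal (Rad : Set V) (α β : V) : Prop :=
  α ≠ β ∧ α ≠ -β ∧ α + β ∉ Rad ∧ α - β ∉ Rad

/-- A vector is regular for `Rad` if it is orthogonal to no root. -/
def IsRegular (Rad : Set V) (v : V) : Prop := ∀ α ∈ Rad, ⟪α, v⟫ ≠ 0

/-- The positive roots determined by a regular vector `v`. -/
def posRoots (Rad : Set V) (v : V) : Set V := {α ∈ Rad | 0 < ⟪α, v⟫}

/-- The base of simple roots determined by a regular vector `v`: the positive roots which
are not sums of two positive roots. -/
def simpleBase (Rad : Set V) (v : V) : Set V :=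
  {α ∈ posRoots Rad v | ¬ ∃ β ∈ posRoots Rad v, ∃ γ ∈ posRoots Rad v, α = β + γ}

/-- A regular vector `v` is an S-chamber vector for an involution `t` if
`(α,v)·(t α,v) > 0` for every complex root `α` (i.e. every root with `t α ≠ ±α`). -/
def IsSChamber (Rad : Set V) (t : V ≃ₗᵢ[ℝ] V) (v : V) : Prop :=
  IsRegular Rad v ∧
    ∀ α ∈ Rad, t α ≠ α → t α ≠ -α → 0 < ⟪α, v⟫ * ⟪t α, v⟫

/-- `P ⊆ Rad` is parabolic if `P ∪ (-P) = Rad` and `P` is closed under root addition. -/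
def IsParabolic (Rad P : Set V) : Prop :=
  P ⊆ Rad ∧ (∀ α ∈ Rad, α ∈ P ∨ -α ∈ P) ∧
    ∀ α ∈ P, ∀ β ∈ P, α + β ∈ Rad → α + β ∈ P

/-- Composition `s_{β 0} ∘ s_{β 1} ∘ ⋯ ∘ s_{β (r-1)}` of the reflections in the roots
`β 0, …, β (r-1)`. -/
noncomputable def reflComp : (r : ℕ) → (Fin r → V) → V → V
  | 0, _ => id
  | r + 1, β => reflRoot (β 0) ∘ reflComp r (fun i => β i.succ)

lemma reflRoot_orth {β x : V} (h : ⟪x, β⟫ = 0) : reflRoot β x = x := by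
  simp [reflRoot, h]

lemma reflRoot_self {β : V} (hβ : β ≠ 0) : reflRoot β β = -β := by
  have h : ⟪β, β⟫ ≠ 0 := fun h => hβ (inner_self_eq_zero.mp h)
  rw [reflRoot, mul_div_assoc, div_self h]
  module

lemma map_reflRoot (t : V ≃ₗᵢ[ℝ] V) (b x : V) : t (reflRoot b x) = reflRoot (t b) (t x) := by
  simp [reflRoot, map_sub, map_smul, LinearIsometryEquiv.inner_map_map]

lemma reflRoot_neg (b x : V) : reflRoot (-b) x = reflRoot b x := by
  rw [reflRoot, reflRoot, inner_neg_right, inner_neg_neg]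
  module

lemma reflRoot_comm {a b : V} (h : ⟪a, b⟫ = 0) (x : V) :
    reflRoot a (reflRoot b x) = reflRoot b (reflRoot a x) := by
  have h' : ⟪b, a⟫ = 0 := by rw [real_inner_comm]; exact h
  simp only [reflRoot, inner_sub_left, inner_smul_left, h, h', RCLike.star_def, map_ofNat]
  simp only [conj_trivial, mul_zero, sub_zero]
  module

lemma reflection_coe [FiniteDimensional ℝ V] {β : V} (x : V) :
    Submodule.reflection (ℝ ∙ β)ᗮ x = reflRoot β x := by
  rw [Submodule.reflection_orthogonal_apply, Submodule.reflection_singleton_apply, reflRoot,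
    real_inner_comm β x, real_inner_self_eq_norm_sq]
  simp only [RCLike.ofReal_real_eq_id, id_eq]
  module

lemma reflComp_comm {r : ℕ} {f : Fin r → V} {b : V} (h : ∀ i, ⟪f i, b⟫ = 0) (x : V) :
    reflComp r f (reflRoot b x) = reflRoot b (reflComp r f x) := by
  induction r with
  | zero => rfl
  | succ r ih =>
    show reflRoot (f 0) (reflComp r _ (reflRoot b x)) = _
    rw [ih (fun i => h i.succ), reflRoot_comm (h 0)]
    rfl

lemma reflComp_fixed {r : ℕ} {f : Fin r → V} {x : V} (h : ∀ i, ⟪x, f i⟫ = 0) :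
    reflComp r f x = x := by
  induction r with
  | zero => rfl
  | succ r ih =>
    show reflRoot (f 0) (reflComp r _ x) = x
    rw [ih (fun i => h i.succ), reflRoot_orth (h 0)]

lemma reflComp_cons (r : ℕ) (b0 : V) (b : Fin r → V) (x : V) :
    reflComp (r + 1) (Fin.cons b0 b) x = reflRoot b0 (reflComp r b x) := by
  simp only [reflComp, Function.comp_apply, Fin.cons_zero, Fin.cons_succ]

lemma neg_mem {Rad : Set V} (hRS : IsRootSystem Rad) {α : V} (hα : α ∈ Rad) : -α ∈ Rad := by
  have := hRS.reflMem α hα α hα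
  rwa [reflRoot_self (hRS.nonzero α hα)] at this

lemma mem_map {Rad : Set V} {t : V ≃ₗᵢ[ℝ] V} (ht : IsInvolution Rad t) {α : V}
    (hα : α ∈ Rad) : t α ∈ Rad := ht.maps ▸ Set.mem_image_of_mem _ hα

theorem stmt3_aux [FiniteDimensional ℝ V] (Rad : Set V) (hRS : IsRootSystem Rad) :
    ∀ n : ℕ, ∀ t : V ≃ₗᵢ[ℝ] V, IsInvolution Rad t →
      {α ∈ Rad | t α = -α}.ncard ≤ n →
    ∃ (ε : V ≃ₗᵢ[ℝ] V) (r : ℕ) (β : Fin r → V),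
      IsInvolution Rad ε ∧ (∀ α ∈ Rad, ε α ≠ -α) ∧
      (∀ i, β i ∈ Rad) ∧ (∀ i j, i ≠ j → StronglyOrthogonal Rad (β i) (β j)) ∧
      (∀ i, ε (β i) = β i) ∧ (∀ i, t (β i) = -(β i)) ∧
      (∀ x : V, t x = ε (reflComp r β x)) := by
  intro n
  induction n with
  | zero =>
    intro t ht hcard
    have hNfin : {α ∈ Rad | t α = -α}.Finite := hRS.finite.subset (Set.sep_subset _ _)
    have hNe : {α ∈ Rad | t α = -α} = ∅ := by
      rw [← Set.ncard_eq_zero hNfin]; omega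
    refine ⟨t, 0, Fin.elim0, ht, ?_, fun i => i.elim0, fun i => i.elim0,
      fun i => i.elim0, fun i => i.elim0, fun x => rfl⟩
    intro α hα hneg
    exact absurd hNe (Set.nonempty_iff_ne_empty.mp ⟨α, hα, hneg⟩)
  | succ n ih =>
    intro t ht hcard
    set N := {α ∈ Rad | t α = -α} with hNdef
    have hNfin : N.Finite := hRS.finite.subset (Set.sep_subset _ _)
    by_cases hNne : N.Nonempty
    case neg =>
      have h0 : N.ncard = 0 := by
        rw [Set.not_nonempty_iff_eq_empty] at hNne; rw [hNne]; simp
      exact ih t ht (by show N.ncard ≤ n; omega)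
    obtain ⟨β, hβN, hmax⟩ := Set.exists_max_image N (fun x => ‖x‖) hNfin hNne
    obtain ⟨hβRad, hβneg⟩ := hβN
    have hβ0 : β ≠ 0 := hRS.nonzero β hβRad
    have hββ : ⟪β, β⟫ ≠ 0 := fun h => hβ0 (inner_self_eq_zero.mp h)
    set s : V ≃ₗᵢ[ℝ] V := Submodule.reflection (ℝ ∙ β)ᗮ with hsdef
    have hs : ∀ x, s x = reflRoot β x := fun x => reflection_coe x
    have hss : ∀ x, s (s x) = x := fun x => Submodule.reflection_reflection _ x
    set t' : V ≃ₗᵢ[ℝ] V := s.trans t with ht'def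
    have ht'app : ∀ x, t' x = t (s x) := fun x => rfl
    -- t commutes with s
    have hts : ∀ x, t (s x) = s (t x) := by
      intro x
      rw [hs, hs, map_reflRoot, hβneg, reflRoot_neg]
    have ht'inv : IsInvolution Rad t' := by
      constructor
      · have hsRad : (⇑s) '' Rad = Rad := by
          apply Set.Subset.antisymm
          · rintro - ⟨α, hα, rfl⟩
            rw [hs]; exact hRS.reflMem β hβRad α hα
          · intro α hα
            exact ⟨s α, by rw [hs]; exact hRS.reflMem β hβRad α hα, hss α⟩
        have : (⇑t') '' Rad = (⇑t) '' ((⇑s) '' Rad) := by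
          rw [← Set.image_comp]; rfl
        rw [this, hsRad, ht.maps]
      · intro x
        show t (s (t (s x))) = x
        rw [hts x, hss (t x), ht.invol]
    -- roots negated by t' are orthogonal to β and negated by t
    have hN' : ∀ α ∈ Rad, t' α = -α → ⟪α, β⟫ = 0 ∧ t α = -α := by
      intro α hαRad hα
      set c : ℝ := 2 * ⟪α, β⟫ / ⟪β, β⟫ with hcdef
      have h1 : t α - c • t β = -α := by
        rw [ht'app, hs, reflRoot] at hα
        rw [← hα, map_sub, map_smul]
      rw [hβneg, smul_neg, sub_neg_eq_add] at h1
      have h2 : t α = -α - c • β := by rw [← h1]; abel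
      have h4 := congrArg t h2
      rw [ht.invol, map_sub, map_neg, h2, map_smul, hβneg] at h4
      have hb : (c + c) • β = 0 := by
        have h5 : (c + c) • β = (-(-α - c • β) - c • (-β)) - α := by module
        rw [← h4] at h5
        rw [h5, sub_self]
      have hc : c = 0 := by
        rcases smul_eq_zero.mp hb with h | h
        · linarith
        · exact absurd h hβ0
      have hip : ⟪α, β⟫ = 0 := by
        rw [hcdef, div_eq_zero_iff] at hc
        rcases hc with h | h
        · linarith
        · exact absurd h hββ
      refine ⟨hip, ?_⟩
      rw [h2, hc, zero_smul, sub_zero]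
    have ht'β : t' β = β := by
      rw [ht'app, hs, reflRoot_self hβ0, map_neg, hβneg, neg_neg]
    have hβnotN' : β ∉ {α ∈ Rad | t' α = -α} := by
      rintro ⟨-, h⟩
      rw [ht'β] at h
      have h2 : (2:ℝ) • β = 0 := by rw [two_smul]; exact eq_neg_iff_add_eq_zero.mp h
      rcases smul_eq_zero.mp h2 with h' | h'
      · norm_num at h'
      · exact hβ0 h'
    have hcard' : {α ∈ Rad | t' α = -α}.ncard ≤ n := by
      have hsub : {α ∈ Rad | t' α = -α} ⊆ N := by
        rintro α ⟨hαRad, hα⟩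
        exact ⟨hαRad, (hN' α hαRad hα).2⟩
      have : {α ∈ Rad | t' α = -α}.ncard < N.ncard :=
        Set.ncard_lt_ncard ⟨hsub, fun h => hβnotN' (h ⟨hβRad, hβneg⟩)⟩ hNfin
      omega
    obtain ⟨ε, r, b, hεinv, hεspec, hbRad, hSO, hεfix, ht'neg, hdecomp⟩ :=
      ih t' ht'inv hcard'
    -- each b i is orthogonal to β, negated by t
    have hbN' : ∀ i, ⟪b i, β⟫ = 0 ∧ t (b i) = -(b i) := by
      intro i
      exact hN' (b i) (hbRad i) (ht'neg i)
    -- strong orthogonality of β with roots α ∈ N orthogonal to β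
    have hkey : ∀ α, α ∈ Rad → t α = -α → ⟪α, β⟫ = 0 → β + α ∉ Rad ∧ β - α ∉ Rad := by
      intro α hαRad hαneg hip
      have hα0 : α ≠ 0 := hRS.nonzero α hαRad
      have hαα : (0:ℝ) < ⟪α, α⟫ :=
        real_inner_self_nonneg.lt_of_ne (fun h => hα0 (inner_self_eq_zero.mp h.symm))
      have hβα : ⟪β, α⟫ = 0 := by rw [real_inner_comm]; exact hip
      constructor
      · intro hmem
        have hγN : β + α ∈ N := ⟨hmem, by rw [map_add, hβneg, hαneg]; abel⟩
        have := hmax _ hγN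
        have h1 : ‖β + α‖^2 ≤ ‖β‖^2 := by
          apply pow_le_pow_left₀ (norm_nonneg _) this
        rw [← real_inner_self_eq_norm_sq, ← real_inner_self_eq_norm_sq] at h1
        have h2 : ⟪β + α, β + α⟫ = ⟪β, β⟫ + ⟪α, α⟫ := by
          rw [inner_add_add_self, hβα, hip]; ring
        linarith
      · intro hmem
        have hγN : β - α ∈ N := ⟨hmem, by rw [map_sub, hβneg, hαneg]; abel⟩
        have := hmax _ hγN
        have h1 : ‖β - α‖^2 ≤ ‖β‖^2 := by
          apply pow_le_pow_left₀ (norm_nonneg _) this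
        rw [← real_inner_self_eq_norm_sq, ← real_inner_self_eq_norm_sq] at h1
        have h2 : ⟪β - α, β - α⟫ = ⟪β, β⟫ + ⟪α, α⟫ := by
          rw [inner_sub_sub_self, hβα, hip]; ring
        linarith
    have hSOβ : ∀ i, StronglyOrthogonal Rad β (b i) ∧ StronglyOrthogonal Rad (b i) β := by
      intro i
      obtain ⟨hip, htneg⟩ := hbN' i
      obtain ⟨hsum, hdiff⟩ := hkey (b i) (hbRad i) htneg hip
      have hne1 : β ≠ b i := by
        rintro rfl; exact hββ (by rw [real_inner_comm] at hip; exact hip)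
      have hne2 : β ≠ -(b i) := by
        intro h
        apply hββ
        nth_rewrite 1 [h]
        rw [inner_neg_left, hip, neg_zero]
      have hsum' : b i + β ∉ Rad := by rwa [add_comm] at hsum
      have hdiff' : b i - β ∉ Rad := by
        intro h
        apply hdiff
        have := neg_mem hRS h
        rwa [neg_sub] at this
      exact ⟨⟨hne1, hne2, hsum, hdiff⟩,
        ⟨fun h => hne1 h.symm, fun h => hne2 (by rw [h]; simp), hsum', hdiff'⟩⟩
    refine ⟨ε, r + 1, Fin.cons β b, hεinv, hεspec, ?_, ?_, ?_, ?_, ?_⟩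
    · intro i
      obtain rfl | ⟨i', rfl⟩ := Fin.eq_zero_or_eq_succ i
      · exact hβRad
      · rw [Fin.cons_succ]; exact hbRad i'
    · intro i j hij
      obtain rfl | ⟨i', rfl⟩ := Fin.eq_zero_or_eq_succ i <;>
        obtain rfl | ⟨j', rfl⟩ := Fin.eq_zero_or_eq_succ j
      · exact absurd rfl hij
      · rw [Fin.cons_zero, Fin.cons_succ]; exact (hSOβ j').1
      · rw [Fin.cons_zero, Fin.cons_succ]; exact (hSOβ i').2
      · rw [Fin.cons_succ, Fin.cons_succ]
        exact hSO i' j' (fun h => hij (by rw [h]))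
    · intro i
      obtain rfl | ⟨i', rfl⟩ := Fin.eq_zero_or_eq_succ i
      · rw [Fin.cons_zero]
        have h1 : reflComp r b β = β :=
          reflComp_fixed (fun i => by rw [real_inner_comm]; exact (hbN' i).1)
        have := hdecomp β
        rw [ht'β, h1] at this
        exact this.symm
      · rw [Fin.cons_succ]; exact hεfix i'
    · intro i
      obtain rfl | ⟨i', rfl⟩ := Fin.eq_zero_or_eq_succ i
      · rw [Fin.cons_zero]; exact hβneg
      · rw [Fin.cons_succ]; exact (hbN' i').2
    · intro x
      have h1 : t x = t' (s x) := by rw [ht'app, hss]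
      have h2 : reflComp r b (reflRoot β x) = reflRoot β (reflComp r b x) :=
        reflComp_comm (fun i => (hbN' i).1) x
      have h3 : reflComp (r + 1) (Fin.cons β b) x = reflRoot β (reflComp r b x) :=
        reflComp_cons r β b x
      rw [h1, hdecomp, hs, h2, h3]


/-- every involution factors as a special involution composed with the
reflections in a set of pairwise strongly orthogonal imaginary roots fixed by the
special involution. -/
theorem stmt3 {V : Type*} [NormedAddCommGroup V] [InnerProductSpace ℝ V]
    [FiniteDimensional ℝ V] (Rad : Set V) (hRS : IsRootSystem Rad)
    (t : V ≃ₗᵢ[ℝ] V) (ht : IsInvolution Rad t) :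
    ∃ (ε : V ≃ₗᵢ[ℝ] V) (r : ℕ) (β : Fin r → V),
      IsInvolution Rad ε ∧ (∀ α ∈ Rad, ε α ≠ -α) ∧
      (∀ i, β i ∈ Rad) ∧ (∀ i j, i ≠ j → StronglyOrthogonal Rad (β i) (β j)) ∧
      (∀ i, ε (β i) = β i) ∧ (∀ i, t (β i) = -(β i)) ∧
      (∀ x : V, t x = ε (reflComp r β x)) := by
  exact stmt3_aux Rad hRS {α ∈ Rad | t α = -α}.ncard t ht le_rfl

end PaperRS
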